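/- Let d ≥ 1 be odd. In the Clifford algebra Cl(Q) over ℂ described below, define γ₊ = (1/2)(γ_chir + γ_chir γ̃₀), γ₋ = (1/2)(γ_chir − γ_chir γ̃₀), and γ^j = γ_chir γ̃ⱼ for j = 1, …, d. Then these elements satisfy the Lévy-Leblond gamma-matrix relations: γ₊² = 0, γ₋² = 0, γ₊γ₋ + γ₋γ₊ = 1, γ₊γ^j + γ^jγ₊ = 0 and γ₋γ^j + γ^jγ₋ = 0 for all j = 1, …, d, and γ^jγ^k + γ^kγ^j = 2δ_{jk}·1 for all j, k = 1, …, d. -/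

import Mathlib

noncomputable section

/-- The diagonal quadratic form of signature `(1, d)` on `Fin (d+1) → ℂ`:
`Q(e₀) = 1` and `Q(eⱼ) = −1` for `j ≥ 1`, with the associated bilinear form
vanishing on distinct basis vectors. -/
def Qform (d : ℕ) : QuadraticForm ℂ (Fin (d + 1) → ℂ) :=
  QuadraticMap.weightedSumSquares ℂ (fun j : Fin (d + 1) => if j = 0 then (1 : ℂ) else -1)

/-- The generators `γ̃ⱼ` of the Clifford algebra `Cl(Q)`, images of the standard
basis vectors under the canonical embedding `ι`. -/
def γt (d : ℕ) (j : Fin (d + 1)) : CliffordAlgebra (Qform d) :=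
  CliffordAlgebra.ι (Qform d) (Pi.single j 1)

/-- The chirality element `γ_chir = i^{(d+3)d/2} · γ̃₀γ̃₁⋯γ̃_d`. -/
def γchir (d : ℕ) : CliffordAlgebra (Qform d) :=
  (Complex.I ^ ((d + 3) * d / 2)) • ((List.finRange (d + 1)).map (γt d)).prod

/-- `γ₊ = (1/2)(γ_chir + γ_chir γ̃₀)`. -/
def γplus (d : ℕ) : CliffordAlgebra (Qform d) :=
  ((1 : ℂ) / 2) • (γchir d + γchir d * γt d 0)

/-- `γ₋ = (1/2)(γ_chir − γ_chir γ̃₀)`. -/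
def γminus (d : ℕ) : CliffordAlgebra (Qform d) :=
  ((1 : ℂ) / 2) • (γchir d - γchir d * γt d 0)

/-- `γ^j = γ_chir γ̃ⱼ` for `j = 1, …, d`. -/
def γsp (d : ℕ) (j : Fin (d + 1)) : CliffordAlgebra (Qform d) :=
  γchir d * γt d j

lemma Qform_single (d : ℕ) (j : Fin (d + 1)) :
    Qform d (Pi.single j 1) = if j = 0 then 1 else -1 := by
  simp [Qform, QuadraticMap.weightedSumSquares_apply, Pi.single_apply]

lemma γt_sq (d : ℕ) (j : Fin (d + 1)) :
    γt d j * γt d j = algebraMap ℂ _ (if j = 0 then 1 else -1) := by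
  rw [γt, CliffordAlgebra.ι_sq_scalar, Qform_single]

lemma Qform_isOrtho (d : ℕ) {j k : Fin (d + 1)} (h : j ≠ k) :
    (Qform d).IsOrtho (Pi.single j 1) (Pi.single k 1) := by
  rw [QuadraticMap.isOrtho_def]
  simp only [Qform, QuadraticMap.weightedSumSquares_apply, ← Finset.sum_add_distrib]
  refine Finset.sum_congr rfl fun i _ => ?_
  rw [← smul_add]
  congr 1
  simp only [Pi.add_apply, Pi.single_apply]
  rcases eq_or_ne i j with rfl | hij <;> rcases eq_or_ne i k with rfl | hik <;>
    simp_all <;> ring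

lemma γt_anticomm (d : ℕ) {j k : Fin (d + 1)} (h : j ≠ k) :
    γt d j * γt d k = -(γt d k * γt d j) := by
  have := CliffordAlgebra.ι_mul_ι_add_swap_of_isOrtho (Qform_isOrtho d h)
  rw [γt, γt]
  linear_combination (norm := noncomm_ring) this


lemma prod_mul_γt_of_not_mem (d : ℕ) {j : Fin (d + 1)} :
    ∀ (l : List (Fin (d + 1))), j ∉ l →
      (l.map (γt d)).prod * γt d j
        = ((-1 : ℂ) ^ l.length) • (γt d j * (l.map (γt d)).prod)
  | [], _ => by simp
  | a :: t, hj => by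
    have ha : j ≠ a := fun h => hj (h ▸ (List.mem_cons_self : a ∈ a :: t))
    have ht : j ∉ t := fun h => hj (List.mem_cons_of_mem a h)
    have ih := prod_mul_γt_of_not_mem d t ht
    simp only [List.map_cons, List.prod_cons, List.length_cons]
    rw [mul_assoc, ih, mul_smul_comm, ← mul_assoc, γt_anticomm d ha.symm, pow_succ]
    simp only [neg_mul, smul_neg, mul_assoc, mul_smul, neg_one_smul]

lemma prod_mul_γt_of_mem (d : ℕ) {j : Fin (d + 1)} :
    ∀ (l : List (Fin (d + 1))), l.Nodup → j ∈ l →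
      (l.map (γt d)).prod * γt d j
        = ((-1 : ℂ) ^ (l.length - 1)) • (γt d j * (l.map (γt d)).prod)
  | [], _, hj => by simp at hj
  | a :: t, hnd, hj => by
    simp only [List.map_cons, List.prod_cons, List.length_cons, Nat.add_sub_cancel]
    rcases eq_or_ne j a with rfl | hja
    · have ht : j ∉ t := (List.nodup_cons.mp hnd).1
      rw [mul_assoc, prod_mul_γt_of_not_mem d t ht, mul_smul_comm, ← mul_assoc]
    · have hjt : j ∈ t := (List.mem_cons.mp hj).resolve_left hja
      have htne : t ≠ [] := by rintro rfl; simp at hjt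
      have hlen : t.length - 1 + 1 = t.length :=
        Nat.succ_pred_eq_of_pos (List.length_pos_iff.mpr htne)
      have ih := prod_mul_γt_of_mem d t (List.nodup_cons.mp hnd).2 hjt
      rw [mul_assoc, ih, mul_smul_comm, ← mul_assoc, γt_anticomm d hja.symm, ← hlen, pow_succ]
      simp only [neg_mul, smul_neg, mul_assoc, mul_smul, neg_one_smul]
      rw [Nat.add_sub_cancel]

lemma prod_sq (d : ℕ) :
    ∀ (l : List (Fin (d + 1))), l.Nodup →
      (l.map (γt d)).prod * (l.map (γt d)).prod
        = ((-1 : ℂ) ^ (l.length.choose 2)) •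
            (l.map (fun j => γt d j * γt d j)).prod
  | [], _ => by simp
  | a :: t, hnd => by
    have ht : a ∉ t := (List.nodup_cons.mp hnd).1
    have ih := prod_sq d t (List.nodup_cons.mp hnd).2
    simp only [List.map_cons, List.prod_cons, List.length_cons]
    have hc : (t.length + 1).choose 2 = t.length + t.length.choose 2 := by
      rw [Nat.choose_succ_succ, Nat.choose_one_right]
    calc γt d a * (t.map (γt d)).prod * (γt d a * (t.map (γt d)).prod)
        = γt d a * ((t.map (γt d)).prod * γt d a) * (t.map (γt d)).prod := by
          simp only [mul_assoc]
      _ = ((-1 : ℂ) ^ t.length) •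
            (γt d a * γt d a * ((t.map (γt d)).prod * (t.map (γt d)).prod)) := by
          rw [prod_mul_γt_of_not_mem d t ht]
          simp only [mul_smul_comm, smul_mul_assoc, mul_assoc]
      _ = ((-1 : ℂ) ^ t.length * (-1 : ℂ) ^ t.length.choose 2) •
            (γt d a * γt d a * (t.map (fun j => γt d j * γt d j)).prod) := by
          rw [ih, mul_smul_comm, smul_smul]
      _ = ((-1 : ℂ) ^ (t.length + 1).choose 2) •
            (γt d a * γt d a * (t.map (fun j => γt d j * γt d j)).prod) := by
          rw [hc, pow_add]

lemma γchir_anticomm (d : ℕ) (hodd : Odd d) (j : Fin (d + 1)) :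
    γchir d * γt d j = -(γt d j * γchir d) := by
  have h := prod_mul_γt_of_mem d (List.finRange (d + 1)) (List.nodup_finRange _)
    (List.mem_finRange j)
  rw [List.length_finRange, Nat.add_sub_cancel, Odd.neg_one_pow hodd, neg_one_smul] at h
  rw [γchir, smul_mul_assoc, h, mul_smul_comm, smul_neg]

lemma sqprod_eq (d : ℕ) :
    ((List.finRange (d + 1)).map (fun j => γt d j * γt d j)).prod
      = algebraMap ℂ (CliffordAlgebra (Qform d)) ((-1 : ℂ) ^ d) := by
  simp only [γt_sq]
  rw [show (fun j : Fin (d+1) => algebraMap ℂ (CliffordAlgebra (Qform d))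
      (if j = 0 then 1 else -1))
    = (algebraMap ℂ (CliffordAlgebra (Qform d))) ∘ (fun j => if j = 0 then (1:ℂ) else -1)
    from rfl, ← List.map_map, ← map_list_prod, ← Fin.prod_univ_def]
  congr 1
  rw [← Finset.mul_prod_erase Finset.univ _ (Finset.mem_univ (0 : Fin (d+1))), if_pos rfl,
    one_mul, Finset.prod_congr rfl (fun j hj => if_neg (Finset.mem_erase.mp hj).1),
    Finset.prod_const, Finset.card_erase_of_mem (Finset.mem_univ _), Finset.card_univ,
    Fintype.card_fin, Nat.add_sub_cancel]

lemma γchir_sq (d : ℕ) (hodd : Odd d) : γchir d * γchir d = 1 := by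
  obtain ⟨m, rfl⟩ := hodd
  have hP := prod_sq (2*m+1) (List.finRange (2*m+1 + 1)) (List.nodup_finRange _)
  rw [List.length_finRange, sqprod_eq] at hP
  have he : ((2*m+1) + 3) * (2*m+1) / 2 = (m+2) * (2*m+1) := by
    have h2 : ((2*m+1) + 3) * (2*m+1) = 2 * ((m+2) * (2*m+1)) := by ring
    rw [h2, Nat.mul_div_cancel_left _ (by norm_num)]
  have hc : (2*m+1 + 1).choose 2 = (m+1) * (2*m+1) := by
    rw [Nat.choose_two_right]
    have h2 : (2*m+1+1) * (2*m+1+1-1) = 2 * ((m+1) * (2*m+1)) := by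
      simp only [Nat.add_sub_cancel]; ring
    rw [h2, Nat.mul_div_cancel_left _ (by norm_num)]
  rw [γchir, smul_mul_smul_comm, hP, he, hc, smul_smul, Algebra.algebraMap_eq_smul_one,
    smul_smul]
  have : Complex.I ^ ((m+2) * (2*m+1)) * Complex.I ^ ((m+2) * (2*m+1))
      * (-1:ℂ) ^ ((m+1) * (2*m+1)) * (-1:ℂ) ^ (2*m+1) = 1 := by
    rw [← mul_pow, Complex.I_mul_I, ← pow_add, ← pow_add,
      show (m+2) * (2*m+1) + (m+1) * (2*m+1) + (2*m+1) = 2 * ((2*m+1) * (m+2)) by ring,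
      pow_mul]
    norm_num
  rw [this, one_smul]



section AbstractLL

variable {R : Type*} [Ring R] {A x y z : R}

lemma LL_help (hA : A * A = 1) (hu : x * A = -(A * x)) (v : R) :
    (A * x) * (A * v) = -(x * v) := by
  rw [mul_assoc, ← mul_assoc x, hu, neg_mul, mul_neg, ← mul_assoc, ← mul_assoc, hA, one_mul]

lemma LL_help2 (hA : A * A = 1) (hu : x * A = -(A * x)) :
    (A * x) * A = -x := by
  rw [mul_assoc, hu, mul_neg, ← mul_assoc, hA, one_mul]

lemma LL_help3 (hA : A * A = 1) (v : R) : A * (A * v) = v := by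
  rw [← mul_assoc, hA, one_mul]

lemma LL_plus_sq (hA : A * A = 1) (hx : x * A = -(A * x)) (hxx : x * x = 1) :
    (A + A * x) * (A + A * x) = 0 := by
  rw [add_mul, mul_add, mul_add, hA, LL_help3 hA, LL_help2 hA hx, LL_help hA hx, hxx]
  abel

lemma LL_minus_sq (hA : A * A = 1) (hx : x * A = -(A * x)) (hxx : x * x = 1) :
    (A - A * x) * (A - A * x) = 0 := by
  rw [sub_mul, mul_sub, mul_sub, hA, LL_help3 hA, LL_help2 hA hx, LL_help hA hx, hxx]
  abel

lemma LL_pm (hA : A * A = 1) (hx : x * A = -(A * x)) (hxx : x * x = 1) :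
    (A + A * x) * (A - A * x) + (A - A * x) * (A + A * x) = 4 := by
  rw [add_mul, mul_sub, mul_sub, sub_mul, mul_add, mul_add, hA, LL_help3 hA,
    LL_help2 hA hx, LL_help hA hx, hxx]
  noncomm_ring
  norm_num

lemma LL_plus_sp (hA : A * A = 1) (hx : x * A = -(A * x)) (hy : y * A = -(A * y))
    (hxy : x * y = -(y * x)) :
    (A + A * x) * (A * y) + (A * y) * (A + A * x) = 0 := by
  rw [add_mul, mul_add, LL_help3 hA, LL_help hA hx, LL_help2 hA hy, LL_help hA hy, hxy]
  abel

lemma LL_minus_sp (hA : A * A = 1) (hx : x * A = -(A * x)) (hy : y * A = -(A * y))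
    (hxy : x * y = -(y * x)) :
    (A - A * x) * (A * y) + (A * y) * (A - A * x) = 0 := by
  rw [sub_mul, mul_sub, LL_help3 hA, LL_help hA hx, LL_help2 hA hy, LL_help hA hy, hxy]
  abel

lemma LL_sp_sp (hA : A * A = 1) (hy : y * A = -(A * y)) (hz : z * A = -(A * z)) :
    (A * y) * (A * z) + (A * z) * (A * y) = -(y * z + z * y) := by
  rw [LL_help hA hy, LL_help hA hz, neg_add]

end AbstractLL

lemma γt_mul_γchir (d : ℕ) (hodd : Odd d) (j : Fin (d + 1)) :
    γt d j * γchir d = -(γchir d * γt d j) := by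
  rw [γchir_anticomm d hodd j, neg_neg]

lemma γt0_sq (d : ℕ) : γt d 0 * γt d 0 = 1 := by
  rw [γt_sq, if_pos rfl, map_one]

lemma γtj_sq (d : ℕ) {j : Fin (d + 1)} (hj : j ≠ 0) : γt d j * γt d j = -1 := by
  rw [γt_sq, if_neg hj, map_neg, map_one]


/-- For odd `d ≥ 1`, the elements `γ₊`, `γ₋`, `γ^j` constructed from
the Dirac gamma matrices satisfy the Lévy-Leblond gamma-matrix relations. -/
theorem levyLeblond_gamma_relations (d : ℕ) (hd : 1 ≤ d) (hodd : Odd d) :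
    γplus d ^ 2 = 0 ∧
    γminus d ^ 2 = 0 ∧
    γplus d * γminus d + γminus d * γplus d = 1 ∧
    (∀ j : Fin (d + 1), j ≠ 0 →
      γplus d * γsp d j + γsp d j * γplus d = 0) ∧
    (∀ j : Fin (d + 1), j ≠ 0 →
      γminus d * γsp d j + γsp d j * γminus d = 0) ∧
    (∀ j k : Fin (d + 1), j ≠ 0 → k ≠ 0 →
      γsp d j * γsp d k + γsp d k * γsp d j
        = if j = k then (2 : CliffordAlgebra (Qform d)) else 0) := by
  have hA : γchir d * γchir d = 1 := γchir_sq d hodd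
  have hx : γt d 0 * γchir d = -(γchir d * γt d 0) := γt_mul_γchir d hodd 0
  have hxx : γt d 0 * γt d 0 = 1 := γt0_sq d
  refine ⟨?_, ?_, ?_, ?_, ?_, ?_⟩
  · rw [γplus, pow_two, smul_mul_smul_comm, LL_plus_sq hA hx hxx, smul_zero]
  · rw [γminus, pow_two, smul_mul_smul_comm, LL_minus_sq hA hx hxx, smul_zero]
  · rw [γplus, γminus, smul_mul_smul_comm, smul_mul_smul_comm, ← smul_add,
      LL_pm hA hx hxx]
    rw [show (4 : CliffordAlgebra (Qform d)) = (4 : ℂ) • (1 : CliffordAlgebra (Qform d)) by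
      rw [Algebra.smul_def, mul_one, map_ofNat]]
    rw [smul_smul]
    norm_num
  · intro j hj
    rw [γplus, γsp, smul_mul_assoc, mul_smul_comm, ← smul_add,
      LL_plus_sp hA hx (γt_mul_γchir d hodd j) (γt_anticomm d hj.symm), smul_zero]
  · intro j hj
    rw [γminus, γsp, smul_mul_assoc, mul_smul_comm, ← smul_add,
      LL_minus_sp hA hx (γt_mul_γchir d hodd j) (γt_anticomm d hj.symm), smul_zero]
  · intro j k hj hk
    rw [γsp, γsp, LL_sp_sp hA (γt_mul_γchir d hodd j) (γt_mul_γchir d hodd k)]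
    rcases eq_or_ne j k with rfl | hjk
    · rw [if_pos rfl, γtj_sq d hj]
      norm_num
    · rw [if_neg hjk, γt_anticomm d hjk]
      simp


end
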